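/- Let (ℳ, D(ℳ)) be an operator-valued multiplication operator on L^p(Ω,X) whose fiber operators M(s) are closed for μ-almost every s, and let λ ∈ ℂ. If λ ∈ ρ(M(s)) for μ-almost every s ∈ Ω and the map s ↦ R(λ,M(s)) belongs to L^∞(Ω,L_s(X)), then λ ∈ ρ(ℳ) and (R(λ,ℳ)f)(s) = R(λ,M(s))f(s) for all f ∈ L^p(Ω,X) and μ-almost every s ∈ Ω. -/

import Mathlib

open MeasureTheory Filter
open scoped ENNReal NNReal

noncomputable section

/-- `R` is the resolvent operator of the (possibly unbounded) operator `A` at `lam`. -/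
def IsResolvent {X : Type*} [NormedAddCommGroup X] [NormedSpace ℂ X]
    (A : X →ₗ.[ℂ] X) (lam : ℂ) (R : X →L[ℂ] X) : Prop :=
  ∃ hR : ∀ x : X, R x ∈ A.domain,
    (∀ x : X, lam • R x - A ⟨R x, hR x⟩ = x) ∧
    ∀ y : A.domain, R (lam • (y : X) - A y) = y

def InResolventSet {X : Type*} [NormedAddCommGroup X] [NormedSpace ℂ X]
    (A : X →ₗ.[ℂ] X) (lam : ℂ) : Prop :=
  ∃ R : X →L[ℂ] X, IsResolvent A lam R

def IsBoundedInverse {X : Type*} [NormedAddCommGroup X] [NormedSpace ℂ X]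
    (A : X →ₗ.[ℂ] X) (B : X →L[ℂ] X) : Prop :=
  ∃ hB : ∀ x : X, B x ∈ A.domain,
    (∀ x : X, A ⟨B x, hB x⟩ = x) ∧ ∀ y : A.domain, B (A y) = y

/-- `𝓜` is the operator-valued multiplication operator on `L^p(Ω,X)` with fibers `M s`. -/
def IsMulOp {Ω : Type*} [MeasurableSpace Ω] (μ : Measure Ω)
    {X : Type*} [NormedAddCommGroup X] [NormedSpace ℂ X] (p : ℝ≥0∞) [Fact (1 ≤ p)]
    (M : Ω → X →ₗ.[ℂ] X) (𝓜 : Lp X p μ →ₗ.[ℂ] Lp X p μ) : Prop :=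
  (∀ f : Lp X p μ, f ∈ 𝓜.domain ↔
    ∃ g : Lp X p μ, ∀ᵐ s ∂μ, ∃ h : f s ∈ (M s).domain, g s = M s ⟨f s, h⟩) ∧
  ∀ f : 𝓜.domain, ∀ᵐ s ∂μ, ∃ h : (f : Lp X p μ) s ∈ (M s).domain,
    (𝓜 f) s = M s ⟨(f : Lp X p μ) s, h⟩

def IsC0Semigroup {Y : Type*} [NormedAddCommGroup Y] [NormedSpace ℂ Y]
    (T : ℝ → Y →L[ℂ] Y) : Prop :=
  T 0 = 1 ∧ (∀ t r : ℝ, 0 ≤ t → 0 ≤ r → T (t + r) = T t ∘L T r) ∧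
  ∀ y : Y, ContinuousOn (fun t => T t y) (Set.Ici (0 : ℝ))

def IsGenerator {Y : Type*} [NormedAddCommGroup Y] [NormedSpace ℂ Y]
    (T : ℝ → Y →L[ℂ] Y) (A : Y →ₗ.[ℂ] Y) : Prop :=
  (∀ y : Y, y ∈ A.domain ↔
    ∃ z : Y, Tendsto (fun t : ℝ => t⁻¹ • (T t y - y)) (nhdsWithin 0 (Set.Ioi 0)) (nhds z)) ∧
  ∀ y : A.domain, Tendsto (fun t : ℝ => t⁻¹ • (T t (y : Y) - (y : Y)))
    (nhdsWithin 0 (Set.Ioi 0)) (nhds (A y))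

/-- If `λ ∈ ρ(M(s))` for a.e. `s` and `s ↦ R(λ,M(s))` belongs to
`L^∞(Ω,L_s(X))`, then `λ ∈ ρ(𝓜)` and the resolvent of `𝓜` acts fiberwise as `R(λ,M(s))`. -/
theorem fiber_resolvents_yield_resolvent_of_multiplication_operator
    {Ω : Type*} [MeasurableSpace Ω] {μ : Measure Ω} [SigmaFinite μ]
    {X : Type*} [NormedAddCommGroup X] [NormedSpace ℂ X] [CompleteSpace X]
    {p : ℝ≥0∞} [Fact (1 ≤ p)] (hp : p ≠ ∞)
    (M : Ω → X →ₗ.[ℂ] X) (𝓜 : Lp X p μ →ₗ.[ℂ] Lp X p μ)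
    (hMul : IsMulOp μ p M 𝓜)
    (hclosed : ∀ᵐ s ∂μ, IsClosed ((M s).graph : Set (X × X)))
    (lam : ℂ) (Rfib : Ω → X →L[ℂ] X)
    (hres : ∀ᵐ s ∂μ, IsResolvent (M s) lam (Rfib s))
    (hLinf : ∀ x : X, MemLp (fun s => Rfib s x) ∞ μ) :
    ∃ R : Lp X p μ →L[ℂ] Lp X p μ, IsResolvent 𝓜 lam R ∧
      ∀ f : Lp X p μ, ∀ᵐ s ∂μ, (R f) s = Rfib s (f s) := by
  classical
  -- a.e. pointwise bound by the norm, in `L^∞`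
  have hb : ∀ h : Lp X ∞ μ, ∀ᵐ s ∂μ, ‖h s‖ ≤ ‖h‖ := by
    intro h
    filter_upwards [ae_le_eLpNormEssSup (f := (h : Ω → X)) (μ := μ)] with s hs
    have h1 : (‖h s‖₊ : ℝ≥0∞) ≤ eLpNorm h ∞ μ := by
      simpa [eLpNorm_exponent_top, ← enorm_eq_nnnorm] using hs
    have h2 := ENNReal.toReal_mono (Lp.eLpNorm_ne_top h) h1
    simpa [Lp.norm_def] using h2
  -- the linear map `x ↦ (s ↦ Rfib s x)` into `L^∞`
  let T : X →ₗ[ℂ] Lp X ∞ μ :=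
    { toFun := fun x => (hLinf x).toLp _
      map_add' := fun x y => by
        show MemLp.toLp _ (hLinf (x + y)) = MemLp.toLp _ (hLinf x) + MemLp.toLp _ (hLinf y)
        apply Lp.ext
        filter_upwards [MemLp.coeFn_toLp (hLinf (x + y)),
          Lp.coeFn_add (MemLp.toLp _ (hLinf x)) (MemLp.toLp _ (hLinf y)),
          MemLp.coeFn_toLp (hLinf x), MemLp.coeFn_toLp (hLinf y)] with s h1 h2 h3 h4
        rw [h1, h2, Pi.add_apply, h3, h4, map_add]
      map_smul' := fun c x => by
        show MemLp.toLp _ (hLinf (c • x)) = c • MemLp.toLp _ (hLinf x)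
        apply Lp.ext
        filter_upwards [MemLp.coeFn_toLp (hLinf (c • x)),
          Lp.coeFn_smul c (MemLp.toLp _ (hLinf x)), MemLp.coeFn_toLp (hLinf x)]
          with s h1 h2 h3
        rw [h1, h2, Pi.smul_apply, h3, (Rfib s).map_smul c x] }
  have hTcoe : ∀ z : X, (T z : Ω → X) =ᵐ[μ] fun s => Rfib s z := fun z =>
    MemLp.coeFn_toLp (hLinf z)
  have hTcont : Continuous T := by
    apply T.continuous_of_seq_closed_graph
    intro u x g hu hTu
    have hconv : Tendsto (fun n => ‖T (u n) - g‖) atTop (nhds 0) := by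
      rw [tendsto_iff_norm_sub_tendsto_zero] at hTu
      exact hTu
    have hae : ∀ n : ℕ, ∀ᵐ s ∂μ, ‖Rfib s (u n) - g s‖ ≤ ‖T (u n) - g‖ := by
      intro n
      filter_upwards [hb (T (u n) - g), Lp.coeFn_sub (T (u n)) g,
        hTcoe (u n)] with s h1 h2 h3
      rw [h2, Pi.sub_apply, h3] at h1
      exact h1
    symm
    apply Lp.ext
    filter_upwards [ae_all_iff.2 hae, hTcoe x] with s hs hxs
    have h1 : Tendsto (fun n => Rfib s (u n)) atTop (nhds (g s)) := by
      rw [tendsto_iff_norm_sub_tendsto_zero]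
      exact squeeze_zero (fun n => norm_nonneg _) hs hconv
    have h2 : Tendsto (fun n => Rfib s (u n)) atTop (nhds (Rfib s x)) :=
      ((Rfib s).continuous.tendsto x).comp hu
    rw [hxs]
    exact tendsto_nhds_unique h2 h1
  let Tc : X →L[ℂ] Lp X ∞ μ := ⟨T, hTcont⟩
  set C : ℝ := ‖Tc‖ with hC
  have hC0 : 0 ≤ C := norm_nonneg _
  -- the uniform bound
  have key : ∀ x : X, ∀ᵐ s ∂μ, ‖Rfib s x‖ ≤ C * ‖x‖ := by
    intro x
    filter_upwards [hb (T x), hTcoe x] with s h1 h2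
    rw [h2] at h1
    exact h1.trans (Tc.le_opNorm x)
  -- measurability of the fiberwise image
  have hsimple : ∀ φ : SimpleFunc Ω X, AEStronglyMeasurable (fun s => Rfib s (φ s)) μ := by
    intro φ
    induction φ using SimpleFunc.induction with
    | @const c A hs =>
      have : (fun s => Rfib s ((SimpleFunc.piecewise A hs (SimpleFunc.const Ω c)
          (SimpleFunc.const Ω 0)) s)) = Set.indicator A (fun s => Rfib s c) := by
        funext s
        by_cases h : s ∈ A
        · simp [SimpleFunc.piecewise_apply, Set.indicator_apply, h]
        · simp [SimpleFunc.piecewise_apply, Set.indicator_apply, h]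
      rw [this]
      exact ((hLinf c).aestronglyMeasurable).indicator hs
    | @add φ ψ hdisj hf hg =>
      have : (fun s => Rfib s ((φ + ψ : SimpleFunc Ω X) s))
          = fun s => Rfib s (φ s) + Rfib s (ψ s) := by
        funext s
        simp [map_add]
      rw [this]
      exact hf.add hg
  have hmeas : ∀ f : Ω → X, AEStronglyMeasurable f μ →
      AEStronglyMeasurable (fun s => Rfib s (f s)) μ := by
    intro f hf
    have hmk := hf.stronglyMeasurable_mk
    have : AEStronglyMeasurable (fun s => Rfib s (hf.mk f s)) μ := by
      apply aestronglyMeasurable_of_tendsto_ae atTop (fun n => hsimple (hmk.approx n))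
      exact Eventually.of_forall fun s =>
        ((Rfib s).continuous.tendsto _).comp (hmk.tendsto_approx s)
    refine this.congr ?_
    filter_upwards [hf.ae_eq_mk] with s hs
    rw [hs]
  -- the fiberwise bound at the values of `f`
  have hbound : ∀ f : Ω → X, AEStronglyMeasurable f μ →
      ∀ᵐ s ∂μ, ‖Rfib s (f s)‖ ≤ C * ‖f s‖ := by
    intro f hf
    have hmk := hf.stronglyMeasurable_mk
    obtain ⟨c, hc_count, hc_sub⟩ := hmk.isSeparable_range
    have hball : ∀ᵐ s ∂μ, ∀ x ∈ c, ‖Rfib s x‖ ≤ C * ‖x‖ :=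
      (ae_ball_iff hc_count).2 fun x _ => key x
    filter_upwards [hball, hf.ae_eq_mk] with s hs hfs
    have hclosed' : IsClosed {y : X | ‖Rfib s y‖ ≤ C * ‖y‖} :=
      isClosed_le ((Rfib s).continuous.norm) (continuous_const.mul continuous_norm)
    have hsubset : closure c ⊆ {y : X | ‖Rfib s y‖ ≤ C * ‖y‖} :=
      closure_minimal (fun x hx => hs x hx) hclosed'
    have : hf.mk f s ∈ {y : X | ‖Rfib s y‖ ≤ C * ‖y‖} :=
      hsubset (hc_sub (Set.mem_range_self s))
    rw [hfs]
    exact this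
  -- `f ↦ (s ↦ Rfib s (f s))` is in `L^p`
  have hmem : ∀ f : Lp X p μ, MemLp (fun s => Rfib s (f s)) p μ := fun f =>
    MemLp.of_le_mul (Lp.memLp f) (hmeas _ (Lp.aestronglyMeasurable f))
      (hbound _ (Lp.aestronglyMeasurable f))
  -- the candidate resolvent as a linear map
  let R₀ : Lp X p μ →ₗ[ℂ] Lp X p μ :=
    { toFun := fun f => (hmem f).toLp _
      map_add' := fun f g => by
        show MemLp.toLp _ (hmem (f + g)) = MemLp.toLp _ (hmem f) + MemLp.toLp _ (hmem g)
        apply Lp.ext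
        filter_upwards [MemLp.coeFn_toLp (hmem (f + g)), Lp.coeFn_add f g,
          (MemLp.coeFn_toLp (hmem f)).add (MemLp.coeFn_toLp (hmem g)),
          Lp.coeFn_add ((hmem f).toLp _) ((hmem g).toLp _)] with s h1 h2 h3 h4
        rw [h1, h4]
        simp only [Pi.add_apply] at h3 ⊢
        rw [h3, h2, Pi.add_apply, map_add]
      map_smul' := fun a f => by
        show MemLp.toLp _ (hmem (a • f)) = a • MemLp.toLp _ (hmem f)
        apply Lp.ext
        filter_upwards [MemLp.coeFn_toLp (hmem (a • f)), Lp.coeFn_smul a f,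
          Lp.coeFn_smul a ((hmem f).toLp _), MemLp.coeFn_toLp (hmem f)] with s h1 h2 h3 h4
        rw [h1, h3, Pi.smul_apply, h4, h2, Pi.smul_apply, (Rfib s).map_smul] }
  have hR₀ : ∀ f : Lp X p μ, ‖R₀ f‖ ≤ C * ‖f‖ := by
    intro f
    have h1 : eLpNorm (fun s => Rfib s (f s)) p μ ≤ ENNReal.ofReal C * eLpNorm f p μ :=
      eLpNorm_le_mul_eLpNorm_of_ae_le_mul (hbound _ (Lp.aestronglyMeasurable f)) p
    have h2 : ‖R₀ f‖ = (eLpNorm (fun s => Rfib s (f s)) p μ).toReal := Lp.norm_toLp _ (hmem f)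
    rw [h2]
    calc (eLpNorm (fun s => Rfib s (f s)) p μ).toReal
        ≤ (ENNReal.ofReal C * eLpNorm f p μ).toReal :=
          ENNReal.toReal_mono (ENNReal.mul_ne_top ENNReal.ofReal_ne_top
            (Lp.eLpNorm_ne_top f)) h1
      _ ≤ C * ‖f‖ := by
          rw [ENNReal.toReal_mul, ENNReal.toReal_ofReal hC0, Lp.norm_def]
  let R : Lp X p μ →L[ℂ] Lp X p μ := R₀.mkContinuous C hR₀
  have hRf : ∀ f : Lp X p μ, (R f : Ω → X) =ᵐ[μ] fun s => Rfib s (f s) := fun f =>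
    MemLp.coeFn_toLp (hmem f)
  -- membership of `R f` in the domain of `𝓜`
  have hdom : ∀ f : Lp X p μ, R f ∈ 𝓜.domain := by
    intro f
    rw [hMul.1]
    refine ⟨lam • R f - f, ?_⟩
    filter_upwards [hres, hRf f, Lp.coeFn_sub (lam • R f) f,
      Lp.coeFn_smul lam (R f)] with s h1 h2 h3 h4
    obtain ⟨hmemf, hi1, hi2⟩ := h1
    rw [h2]
    refine ⟨hmemf (f s), ?_⟩
    rw [h3, Pi.sub_apply, h4, Pi.smul_apply, h2]
    have := hi1 (f s)
    rw [sub_eq_iff_eq_add'] at this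
    rw [sub_eq_iff_eq_add]
    exact this
  -- the two resolvent identities
  have Mval : ∀ (s : Ω) (y z : X) (hy : y ∈ (M s).domain) (hz : z ∈ (M s).domain),
      y = z → M s ⟨y, hy⟩ = M s ⟨z, hz⟩ := by
    rintro s y z hy hz rfl; rfl
  refine ⟨R, ⟨hdom, ?_, ?_⟩, fun f => hRf f⟩
  · intro f
    apply Lp.ext
    filter_upwards [hres, hRf f, hMul.2 ⟨R f, hdom f⟩,
      Lp.coeFn_sub (lam • R f) (𝓜 ⟨R f, hdom f⟩), Lp.coeFn_smul lam (R f)] with s h1 h2 h3 h4 h5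
    obtain ⟨hmemf, hi1, hi2⟩ := h1
    obtain ⟨hd, heq⟩ := h3
    rw [h4, Pi.sub_apply, h5, Pi.smul_apply, heq,
      Mval s _ _ hd (hmemf (f s)) h2, h2]
    exact hi1 (f s)
  · intro y
    apply Lp.ext
    filter_upwards [hres, hRf (lam • (y : Lp X p μ) - 𝓜 y), hMul.2 y,
      Lp.coeFn_sub (lam • (y : Lp X p μ)) (𝓜 y),
      Lp.coeFn_smul lam (y : Lp X p μ)] with s h1 h2 h3 h4 h5
    obtain ⟨hmemf, hi1, hi2⟩ := h1
    obtain ⟨hd, heq⟩ := h3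
    rw [h2]
    have hu : (lam • (y : Lp X p μ) - 𝓜 y : Lp X p μ) s
        = lam • (y : Lp X p μ) s - M s ⟨(y : Lp X p μ) s, hd⟩ := by
      rw [h4, Pi.sub_apply, h5, Pi.smul_apply, heq]
    rw [hu]
    exact hi2 ⟨(y : Lp X p μ) s, hd⟩
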